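/- No gate contains a clique separator; that is, for every gate G and every clique C of G, the graph G − C is connected (gates are atoms). -/

import Mathlib

/-- A maximal clique (a maximal complete vertex set) of a simple graph. -/
def IsMaxClique {V : Type} (G : SimpleGraph V) (s : Set V) : Prop :=
  G.IsClique s ∧ ∀ t : Set V, G.IsClique t → s ⊆ t → s = t

/-- The number of maximal cliques of a graph. -/
noncomputable def numMaxCliques {V : Type} (G : SimpleGraph V) : ℕ :=
  {s : Set V | IsMaxClique G s}.ncard

/-- The graph obtained from `G` and a chordless path on `l` new vertices by joining the
first vertex of the path to every vertex of `A` and the last vertex to every vertex of `B`. -/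
def joinPath {V : Type} (G : SimpleGraph V) (A B : Set V) (l : ℕ) :
    SimpleGraph (V ⊕ Fin l) where
  Adj x y :=
    match x, y with
    | Sum.inl a, Sum.inl b => G.Adj a b
    | Sum.inl a, Sum.inr i => (i.val = 0 ∧ a ∈ A) ∨ (i.val = l - 1 ∧ a ∈ B)
    | Sum.inr i, Sum.inl a => (i.val = 0 ∧ a ∈ A) ∨ (i.val = l - 1 ∧ a ∈ B)
    | Sum.inr i, Sum.inr j => i.val + 1 = j.val ∨ j.val + 1 = i.val
  symm := by
    constructor
    rintro (a | i) (b | j) h <;> simp_all <;> tauto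
  loopless := by
    constructor
    rintro (a | i) h
    · exact G.irrefl h
    · rcases h with h | h <;> omega

/-- Gates, defined recursively (up to isomorphism): chordless cycles `Cₙ`, `n ≥ 4`, are
gates, and joining a new chordless path to two disjoint maximal cliques of a gate
yields a gate. -/
inductive IsGate : {V : Type} → SimpleGraph V → Prop
  | cycle (n : ℕ) (hn : 4 ≤ n) : IsGate (SimpleGraph.cycleGraph n)
  | extend {V : Type} (G : SimpleGraph V) (C C' : Set V) (l : ℕ)
      (hG : IsGate G) (hC : IsMaxClique G C) (hC' : IsMaxClique G C')
      (hdisj : Disjoint C C') (hl : 2 ≤ l) : IsGate (joinPath G C C' l)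
  | iso {V W : Type} (G : SimpleGraph V) (H : SimpleGraph W)
      (hG : IsGate G) (e : G ≃g H) : IsGate H

/-- An EPT representation of `G`: a family of paths in a host tree such that two distinct
vertices are adjacent iff their paths share an edge of the tree. -/
structure EPTRep {V : Type} (G : SimpleGraph V) where
  VT : Type
  T : SimpleGraph VT
  tree : T.IsTree
  src : V → VT
  tgt : V → VT
  walk : (v : V) → T.Walk (src v) (tgt v)
  isPath : ∀ v, (walk v).IsPath
  adj_iff : ∀ v w : V, v ≠ w →
    (G.Adj v w ↔ ∃ e : Sym2 VT, e ∈ (walk v).edges ∧ e ∈ (walk w).edges)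

/-- The edge set of the path representing `v`. -/
def EPTRep.edges {V : Type} {G : SimpleGraph V} (R : EPTRep G) (v : V) :
    Set (Sym2 R.VT) := {e | e ∈ (R.walk v).edges}

/-- The representation is Helly: every nonempty pairwise edge-intersecting subfamily of
paths has a common edge. -/
def EPTRep.Helly {V : Type} {G : SimpleGraph V} (R : EPTRep G) : Prop :=
  ∀ S : Set V, S.Nonempty →
    (∀ u ∈ S, ∀ v ∈ S, (R.edges u ∩ R.edges v).Nonempty) →
    (⋂ v ∈ S, R.edges v).Nonempty

/-- The host tree has maximum degree at most `h`. -/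
def EPTRep.maxDegLE {V : Type} {G : SimpleGraph V} (R : EPTRep G) (h : ℕ) : Prop :=
  ∀ x : R.VT, (R.T.neighborSet x).ncard ≤ h

/-- The class `[h,2,2]`. -/
def InEPTClass (h : ℕ) {V : Type} (G : SimpleGraph V) : Prop :=
  ∃ R : EPTRep G, R.maxDegLE h

/-- Helly EPT graphs. -/
def IsHellyEPT {V : Type} (G : SimpleGraph V) : Prop :=
  ∃ R : EPTRep G, R.Helly

/-- The class Helly `[h,2,2]`. -/
def InHellyClass (h : ℕ) {V : Type} (G : SimpleGraph V) : Prop :=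
  ∃ R : EPTRep G, R.Helly ∧ R.maxDegLE h

/-- Three paths of the representation form a claw at some claw of the host tree. -/
def EPTRep.FormsClaw {V : Type} {G : SimpleGraph V} (R : EPTRep G) (a b c : V) : Prop :=
  ∃ q x y z : R.VT, R.T.Adj q x ∧ R.T.Adj q y ∧ R.T.Adj q z ∧
    x ≠ y ∧ y ≠ z ∧ x ≠ z ∧
    s(q, x) ∈ R.edges a ∧ s(q, y) ∈ R.edges a ∧
    s(q, y) ∈ R.edges b ∧ s(q, z) ∈ R.edges b ∧
    s(q, x) ∈ R.edges c ∧ s(q, z) ∈ R.edges c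

/-- A multipie of size `k` whose paths are those representing the vertices in `S`. -/
def IsMultipie {V : Type} {G : SimpleGraph V} (R : EPTRep G) (k : ℕ) (S : Set V) : Prop :=
  ∃ (q : R.VT) (qi : Fin k → R.VT), Function.Injective qi ∧
    (∀ i, R.T.Adj q (qi i)) ∧
    (∀ v ∈ S, {i : Fin k | qi i ∈ (R.walk v).support}.ncard = 2) ∧
    (∀ u ∈ S, ∀ v ∈ S, ∀ i j : Fin k, i ≠ j →
      qi i ∈ (R.walk u).support → qi j ∈ (R.walk u).support →
      qi i ∈ (R.walk v).support → qi j ∈ (R.walk v).support → u = v) ∧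
    (∀ i, 2 ≤ {v ∈ S | s(q, qi i) ∈ R.edges v}.ncard) ∧
    (∀ a ∈ S, ∀ b ∈ S, ∀ c ∈ S, ¬ R.FormsClaw a b c)

/-- The next index around a cycle. -/
def finNext {k : ℕ} (hk : 0 < k) (i : Fin k) : Fin k :=
  ⟨(i.val + 1) % k, Nat.mod_lt _ hk⟩

/-- `G` has a clique separator: a complete vertex set whose removal disconnects the graph. -/
def HasCliqueSep {V : Type} (G : SimpleGraph V) : Prop :=
  ∃ C : Set V, G.IsClique C ∧ ¬ (G.induce Cᶜ).Preconnected

/-- An atom of `G`: a maximal vertex subset inducing a connected subgraph without clique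
separators. -/
def IsAtomOf {V : Type} (G : SimpleGraph V) (A : Set V) : Prop :=
  (G.induce A).Connected ∧ ¬ HasCliqueSep (G.induce A) ∧
    ∀ B : Set V, A ⊆ B → (G.induce B).Connected → ¬ HasCliqueSep (G.induce B) → A = B

open SimpleGraph
open scoped Fin.NatCast Fin.CommRing
lemma fin_cast_ne {n k : ℕ} [NeZero n] (h1 : 0 < k) (h2 : k < n) : ((k:ℕ) : Fin n) ≠ 0 := by
  intro h
  rw [Fin.natCast_eq_zero] at h
  exact absurd (Nat.le_of_dvd h1 h) (by omega)

lemma fin_val_one {n : ℕ} [NeZero n] {u : Fin n} (h : u.val = 1) : u = 1 := by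
  have := Fin.cast_val_eq_self u
  rw [h] at this
  rw [← this, Nat.cast_one]

lemma cyc_adj {n : ℕ} [NeZero n] {u v : Fin n} (h : (cycleGraph n).Adj u v) :
    u - v = 1 ∨ v - u = 1 := by
  rw [cycleGraph_adj'] at h
  rcases h with h | h
  · exact Or.inl (fin_val_one h)
  · exact Or.inr (fin_val_one h)

lemma cyc_clique_sub {n : ℕ} [NeZero n] (hn : 4 ≤ n) (C : Set (Fin n))
    (hC : (cycleGraph n).IsClique C) : ∃ a : Fin n, C ⊆ {a, a + 1} := by
  rcases Set.eq_empty_or_nonempty C with h | ⟨x, hx⟩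
  · exact ⟨0, by simp [h]⟩
  have h2 : ((2:ℕ) : Fin n) ≠ 0 := fin_cast_ne (by omega) (by omega)
  have h3 : ((3:ℕ) : Fin n) ≠ 0 := fin_cast_ne (by omega) (by omega)
  have key : ∀ z ∈ C, z = x ∨ z = x + 1 ∨ z = x - 1 := by
    intro z hz
    by_cases hzx : z = x
    · exact Or.inl hzx
    rcases cyc_adj (hC hz hx hzx) with h | h
    · right; left
      have : z = 1 + x := by rw [← h]; ring
      rw [this]; ring
    · right; right
      have : x = 1 + z := by rw [← h]; ring
      rw [show z = x - 1 from by rw [this]; ring]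
  by_cases hxp : x + 1 ∈ C
  · refine ⟨x, fun z hz => ?_⟩
    simp only [Set.mem_insert_iff, Set.mem_singleton_iff]
    rcases key z hz with h | h | h
    · exact Or.inl h
    · exact Or.inr h
    · exfalso
      have hne : z ≠ x + 1 := by
        rw [h]; intro he
        apply h2
        have h0 : x + 1 - (x - 1) = 0 := by rw [← he]; ring
        rw [← h0]; push_cast; ring
      rcases cyc_adj (hC hz hxp hne) with hh | hh
      · apply h3
        have : z - (x + 1) = 1 := hh
        rw [h] at this
        have : ((3:ℕ) : Fin n) = x - 1 - (x+1) - 1 + ((3:ℕ):Fin n) + 1 - 1 := by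
          rw [this]; ring
        rw [this]; push_cast; ring
      · apply fin_cast_ne (n := n) (k := 1) (by omega) (by omega)
        have h5 : x + 1 - z = 1 := hh
        rw [h] at h5
        have h4 : ((1:ℕ) : Fin n) = (x + 1 - (x - 1)) - 1 := by push_cast; ring
        rw [h4, h5, sub_self]
  · refine ⟨x - 1, fun z hz => ?_⟩
    simp only [Set.mem_insert_iff, Set.mem_singleton_iff]
    have hx1 : x - 1 + 1 = x := by ring
    rcases key z hz with h | h | h
    · rw [hx1]; exact Or.inr h
    · exact absurd (h ▸ hz) hxp
    · exact Or.inl h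

lemma fin_one_val {n : ℕ} [NeZero n] (hn : 2 ≤ n) : ((1 : Fin n)).val = 1 := by
  rw [← Nat.cast_one, Fin.val_cast_of_lt (by omega)]

lemma cyc_conn {n : ℕ} [NeZero n] (hn : 4 ≤ n) (a : Fin n) (C : Set (Fin n))
    (hsub : C ⊆ {a, a + 1}) : ((cycleGraph n).induce Cᶜ).Connected := by
  have hmem : ∀ k : ℕ, 2 ≤ k → k ≤ n - 1 → a + ((k : ℕ) : Fin n) ∈ Cᶜ := by
    intro k h1 h2 hk
    rcases hsub hk with h | h
    · exact fin_cast_ne (n := n) (k := k) (by omega) (by omega)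
        (by rwa [add_eq_left] at h)
    · apply fin_cast_ne (n := n) (k := k - 1) (by omega) (by omega)
      rw [Set.mem_singleton_iff] at h
      have h4 : ((k:ℕ) : Fin n) = 1 := by
        have := h
        rwa [add_right_inj] at this
      rw [Nat.cast_sub (by omega), h4, Nat.cast_one, sub_self]
  have adj_ind : ∀ u v : Fin n, (hu : u ∈ Cᶜ) → (hv : v ∈ Cᶜ) → (cycleGraph n).Adj u v →
      ((cycleGraph n).induce Cᶜ).Adj ⟨u, hu⟩ ⟨v, hv⟩ := fun u v hu hv h => h
  have claim : ∀ k : ℕ, (h : k ≤ n - 3) →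
      ((cycleGraph n).induce Cᶜ).Reachable ⟨a + ((2:ℕ) : Fin n), hmem 2 le_rfl (by omega)⟩
        ⟨a + ((k + 2 : ℕ) : Fin n), hmem (k+2) (by omega) (by omega)⟩ := by
    intro k
    induction k with
    | zero => intro _; rfl
    | succ k ih =>
      intro h
      refine (ih (by omega)).trans (Adj.reachable (adj_ind _ _ _ _ ?_))
      rw [cycleGraph_adj']
      right
      have he : (a + ((k + 1 + 2 : ℕ) : Fin n)) - (a + ((k + 2 : ℕ) : Fin n)) = 1 := by
        push_cast; ring
      rw [he, fin_one_val (by omega)]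
  have reach : ∀ v : Fin n, (hv : v ∈ Cᶜ) →
      ((cycleGraph n).induce Cᶜ).Reachable ⟨a + ((2:ℕ) : Fin n), hmem 2 le_rfl (by omega)⟩
        ⟨v, hv⟩ := by
    intro v hv
    obtain ⟨k, hklt, he⟩ : ∃ k : ℕ, k < n ∧ a + ((2:ℕ) : Fin n) + ((k : ℕ) : Fin n) = v :=
      ⟨(v - (a + ((2:ℕ) : Fin n))).val, Fin.is_lt _, by rw [Fin.cast_val_eq_self]; ring⟩
    rcases lt_or_ge k (n - 2) with hk | hk
    · have hv' : v = a + ((k + 2 : ℕ) : Fin n) := by rw [← he]; push_cast; ring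
      rw [show (⟨v, hv⟩ : ↥(Cᶜ)) = ⟨a + ((k + 2 : ℕ) : Fin n),
        hmem (k+2) (by omega) (by omega)⟩ from Subtype.ext hv']
      exact claim k (by omega)
    rcases lt_or_ge k (n-1) with hk2 | hk2
    · -- k = n - 2, v = a
      have hc0 : ((2:ℕ) : Fin n) + ((n - 2 : ℕ) : Fin n) = 0 := by
        rw [← Nat.cast_add, show 2 + (n - 2) = n by omega, Fin.natCast_self]
      have hv' : v = a := by
        rw [← he, show k = n - 2 by omega, add_assoc, hc0, add_zero]
      rw [show (⟨v, hv⟩ : ↥(Cᶜ)) = ⟨a, hv' ▸ hv⟩ from Subtype.ext hv']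
      refine (claim (n - 3) le_rfl).trans (Adj.reachable (adj_ind _ _ _ _ ?_))
      rw [cycleGraph_adj']
      right
      have he2 : a - (a + ((n - 3 + 2 : ℕ) : Fin n)) = 1 := by
        have : ((n - 3 + 2 : ℕ) : Fin n) + 1 = 0 := by
          rw [← Nat.cast_one, ← Nat.cast_add, show n - 3 + 2 + 1 = n by omega, Fin.natCast_self]
        have h9 : ((n - 3 + 2 : ℕ) : Fin n) = -1 := by
          rw [eq_neg_iff_add_eq_zero]; exact this
        rw [h9]; ring
      rw [he2, fin_one_val (by omega)]
    · -- k = n - 1, v = a + 1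
      have hc0 : ((2:ℕ) : Fin n) + ((n - 1 : ℕ) : Fin n) = 1 := by
        rw [← Nat.cast_add, show 2 + (n - 1) = n + 1 by omega, Nat.cast_add, Fin.natCast_self,
          zero_add, Nat.cast_one]
      have hv' : v = a + 1 := by
        rw [← he, show k = n - 1 by omega, add_assoc, hc0]
      rw [show (⟨v, hv⟩ : ↥(Cᶜ)) = ⟨a + 1, hv' ▸ hv⟩ from Subtype.ext hv']
      refine Adj.reachable (adj_ind _ _ _ _ ?_)
      rw [cycleGraph_adj']
      left
      have he3 : (a + ((2:ℕ) : Fin n)) - (a + 1) = 1 := by push_cast; ring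
      rw [he3, fin_one_val (by omega)]
  haveI : Nonempty ↥(Cᶜ) := ⟨⟨a + ((2:ℕ) : Fin n), hmem 2 le_rfl (by omega)⟩⟩
  refine ⟨fun u v => ?_⟩
  exact (reach u u.2).symm.trans (reach v v.2)

section Extend

variable {V : Type} {G : SimpleGraph V} {A B : Set V} {l : ℕ}

lemma jp_adj_ll {a b : V} : (joinPath G A B l).Adj (Sum.inl a) (Sum.inl b) ↔ G.Adj a b := Iff.rfl

lemma jp_adj_lr {a : V} {i : Fin l} : (joinPath G A B l).Adj (Sum.inl a) (Sum.inr i) ↔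
    ((i.val = 0 ∧ a ∈ A) ∨ (i.val = l - 1 ∧ a ∈ B)) := Iff.rfl

lemma jp_adj_rr {i j : Fin l} : (joinPath G A B l).Adj (Sum.inr i) (Sum.inr j) ↔
    (i.val + 1 = j.val ∨ j.val + 1 = i.val) := Iff.rfl

lemma extend_conn (hA : IsMaxClique G A) (hB : IsMaxClique G B)
    (hdisj : Disjoint A B) (hl : 2 ≤ l)
    (ih : ∀ E : Set V, G.IsClique E → (G.induce Eᶜ).Connected)
    (D : Set (V ⊕ Fin l)) (hD : (joinPath G A B l).IsClique D) :
    ((joinPath G A B l).induce Dᶜ).Connected := by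
  set H := joinPath G A B l with hHdef
  set S := Dᶜ with hSdef
  -- basic nonemptiness
  haveI hVne : Nonempty V := by
    have h := (ih ∅ (by simp)).nonempty
    exact ⟨(Classical.choice h).1⟩
  have hAne : A.Nonempty := by
    rcases Set.eq_empty_or_nonempty A with h | h
    · exfalso
      obtain ⟨v0⟩ := hVne
      have := hA.2 {v0} (by simp) (by simp [h])
      simp [h] at this
    · exact h
  have hBne : B.Nonempty := by
    rcases Set.eq_empty_or_nonempty B with h | h
    · exfalso
      obtain ⟨v0⟩ := hVne
      have := hB.2 {v0} (by simp) (by simp [h])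
      simp [h] at this
    · exact h
  -- the vertex-part of D
  set Dv : Set V := {a | Sum.inl a ∈ D} with hDvdef
  have hDvClique : G.IsClique Dv := by
    intro a ha b hb hab
    have := hD ha hb (by simp [hab])
    exact jp_adj_ll.mp this
  -- adjacency transfer into the induced graph
  have adj_ind : ∀ u v : V ⊕ Fin l, (hu : u ∈ S) → (hv : v ∈ S) → H.Adj u v →
      (H.induce S).Adj ⟨u, hu⟩ ⟨v, hv⟩ := fun u v hu hv h => h
  -- reachability inside the G part
  have gReach : ∀ v w : V, (hv : Sum.inl v ∈ S) → (hw : Sum.inl w ∈ S) →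
      (H.induce S).Reachable ⟨Sum.inl v, hv⟩ ⟨Sum.inl w, hw⟩ := by
    intro v w hv hw
    have hconn := ih Dv hDvClique
    let f : G.induce Dvᶜ →g H.induce S :=
      ⟨fun x => ⟨Sum.inl x.1, x.2⟩, fun {x y} hadj => hadj⟩
    exact (hconn.preconnected ⟨v, hv⟩ ⟨w, hw⟩).map f
  -- reachability along the path part
  have pReach : ∀ (d : ℕ) (i : Fin l) (h : i.val + d < l)
      (hall : ∀ k : Fin l, i.val ≤ k.val → k.val ≤ i.val + d → Sum.inr k ∈ S),
      (H.induce S).Reachable ⟨Sum.inr i, hall i le_rfl (by omega)⟩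
        ⟨Sum.inr ⟨i.val + d, h⟩, hall _ (by simp only [Fin.val_mk]; omega) (by simp only [Fin.val_mk]; omega)⟩ := by
    intro d
    induction d with
    | zero =>
      intro i h hall
      have : (⟨Sum.inr ⟨i.val + 0, h⟩, hall _ (by simp only [Fin.val_mk]; omega) (by simp only [Fin.val_mk]; omega)⟩ : ↥S) =
          ⟨Sum.inr i, hall i le_rfl (by omega)⟩ := by
        apply Subtype.ext; simp
      rw [this]
    | succ d ihd =>
      intro i h hall
      have step : (H.induce S).Reachable ⟨Sum.inr ⟨i.val + d, by omega⟩, hall _ (by simp only [Fin.val_mk]; omega) (by simp only [Fin.val_mk]; omega)⟩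
          ⟨Sum.inr ⟨i.val + (d+1), h⟩, hall _ (by simp only [Fin.val_mk]; omega) (by simp only [Fin.val_mk]; omega)⟩ := by
        refine Adj.reachable (adj_ind _ _ _ _ ?_)
        rw [hHdef, jp_adj_rr]
        left; simp; omega
      exact (ihd i (by omega) (fun k h1 h2 => hall k h1 (by omega))).trans step
  -- generalized path reachability
  have pReach' : ∀ (i j : Fin l) (hij : i.val ≤ j.val)
      (hall : ∀ k : Fin l, i.val ≤ k.val → k.val ≤ j.val → Sum.inr k ∈ S),
      (H.induce S).Reachable ⟨Sum.inr i, hall i le_rfl hij⟩ ⟨Sum.inr j, hall j hij le_rfl⟩ := by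
    intro i j hij hall
    have h := pReach (j.val - i.val) i (by omega) (fun k h1 h2 => hall k h1 (by omega))
    convert h using 2
    exact congrArg Sum.inr (Fin.ext (by simp; omega))
  set i0 : Fin l := ⟨0, by omega⟩ with hi0def
  set iL : Fin l := ⟨l - 1, by omega⟩ with hiLdef
  have adjL : ∀ (a : V) (ha : a ∈ A) (haS : Sum.inl a ∈ S) (h0S : Sum.inr i0 ∈ S),
      (H.induce S).Adj ⟨Sum.inr i0, h0S⟩ ⟨Sum.inl a, haS⟩ :=
    fun a ha haS h0S => adj_ind _ _ _ _ (Or.inl ⟨rfl, ha⟩)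
  have adjR : ∀ (b : V) (hb : b ∈ B) (hbS : Sum.inl b ∈ S) (hLS : Sum.inr iL ∈ S),
      (H.induce S).Adj ⟨Sum.inr iL, hLS⟩ ⟨Sum.inl b, hbS⟩ :=
    fun b hb hbS hLS => adj_ind _ _ _ _ (Or.inr ⟨rfl, hb⟩)
  have concl : ∀ (hub : ↥S), (∀ x : ↥S, (H.induce S).Reachable x hub) →
      (H.induce S).Connected := by
    intro hub hr
    haveI : Nonempty ↥S := ⟨hub⟩
    exact ⟨fun u v => (hr u).trans (hr v).symm⟩
  by_cases h0 : Sum.inr i0 ∈ D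
  · by_cases hL : Sum.inr iL ∈ D
    · -- both endpoints removed: l = 2, no path vertices remain, Dv empty
      have hne : (Sum.inr i0 : V ⊕ Fin l) ≠ Sum.inr iL := by
        intro h
        have := congrArg Fin.val (Sum.inr.inj h)
        simp [hi0def, hiLdef] at this
        omega
      have hl2 : l = 2 := by
        rcases jp_adj_rr.mp (hD h0 hL hne) with h | h <;> simp [hi0def, hiLdef] at h <;> omega
      have hDvE : ∀ a : V, Sum.inl a ∉ D := by
        intro a ha
        have h1 : a ∈ A := by
          rcases jp_adj_lr.mp (hD ha h0 (by simp)) with h | h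
          · exact h.2
          · exfalso; have := h.1; simp [hi0def] at this; omega
        have h2 : a ∈ B := by
          rcases jp_adj_lr.mp (hD ha hL (by simp)) with h | h
          · exfalso; have := h.1; simp [hiLdef] at this; omega
          · exact h.2
        exact Set.disjoint_left.mp hdisj h1 h2
      obtain ⟨a0, _⟩ := hAne
      refine concl ⟨Sum.inl a0, hDvE a0⟩ ?_
      rintro ⟨(v | i), hx⟩
      · exact gReach v a0 hx (hDvE a0)
      · exfalso
        apply hx
        have hlt := i.isLt
        rcases (by omega : i.val = 0 ∨ i.val = 1) with h | h
        · have : i = i0 := Fin.ext (by simp [hi0def, h])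
          rwa [this]
        · have : i = iL := Fin.ext (by simp [hiLdef, h]; omega)
          rwa [this]
    · -- only first endpoint removed
      have hDvA : ∀ a : V, Sum.inl a ∈ D → a ∈ A := by
        intro a ha
        rcases jp_adj_lr.mp (hD ha h0 (by simp)) with h | h
        · exact h.2
        · exfalso; have := h.1; simp [hi0def] at this; omega
      by_cases h1 : Sum.inr (⟨1, by omega⟩ : Fin l) ∈ D
      · have hDvE : ∀ a : V, Sum.inl a ∉ D := by
          intro a ha
          rcases jp_adj_lr.mp (hD ha h1 (by simp)) with h | h
          · have := h.1; simp at this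
          · apply hL
            have he : iL = ⟨1, by omega⟩ := Fin.ext (by have := h.1; simp [hiLdef] at this ⊢; omega)
            rwa [he]
        have hDP : ∀ j : Fin l, Sum.inr j ∈ D → j.val ≤ 1 := by
          intro j hj
          by_cases hji : j = i0
          · simp [hji, hi0def]
          rcases jp_adj_rr.mp (hD hj h0 (fun h => hji (Sum.inr.inj h))) with h | h <;>
            simp [hi0def] at h <;> omega
        obtain ⟨b0, hb0⟩ := hBne
        refine concl ⟨Sum.inl b0, hDvE b0⟩ ?_
        rintro ⟨(v | i), hx⟩
        · exact gReach v b0 hx (hDvE b0)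
        · have hi2 : 2 ≤ i.val := by
            by_contra hc
            apply hx
            rcases (by omega : i.val = 0 ∨ i.val = 1) with h | h
            · have : i = i0 := Fin.ext (by simp [hi0def, h])
              rwa [this]
            · have : i = ⟨1, by omega⟩ := Fin.ext (by simp [h])
              rwa [this]
          have hall : ∀ k : Fin l, i.val ≤ k.val → k.val ≤ iL.val → Sum.inr k ∈ S := by
            intro k hk _ hkD
            have := hDP k hkD
            omega
          exact (pReach' i iL (by simp [hiLdef]; omega) hall).trans
            (Adj.reachable (adjR b0 hb0 (hDvE b0) (hall iL (by simp [hiLdef]; omega) le_rfl)))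
      · have hDP : ∀ j : Fin l, Sum.inr j ∈ D → j = i0 := by
          intro j hj
          by_contra hji
          rcases jp_adj_rr.mp (hD hj h0 (fun h => hji (Sum.inr.inj h))) with h | h
          · simp [hi0def] at h
          · apply h1
            have he : j = ⟨1, by omega⟩ := Fin.ext (by simp [hi0def] at h ⊢; omega)
            rwa [← he]
        obtain ⟨b0, hb0⟩ := hBne
        have hb0S : Sum.inl b0 ∈ S := fun hc => Set.disjoint_left.mp hdisj (hDvA b0 hc) hb0
        refine concl ⟨Sum.inl b0, hb0S⟩ ?_
        rintro ⟨(v | i), hx⟩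
        · exact gReach v b0 hx hb0S
        · have hi1 : 1 ≤ i.val := by
            by_contra hc
            apply hx
            have : i = i0 := Fin.ext (by simp [hi0def]; omega)
            rwa [this]
          have hall : ∀ k : Fin l, i.val ≤ k.val → k.val ≤ iL.val → Sum.inr k ∈ S := by
            intro k hk _ hkD
            have := congrArg Fin.val (hDP k hkD)
            simp [hi0def] at this
            omega
          exact (pReach' i iL (by simp [hiLdef]; omega) hall).trans
            (Adj.reachable (adjR b0 hb0 hb0S (hall iL (by simp [hiLdef]; omega) le_rfl)))
  · by_cases hL : Sum.inr iL ∈ D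
    · -- only last endpoint removed (mirror)
      have hDvB : ∀ a : V, Sum.inl a ∈ D → a ∈ B := by
        intro a ha
        rcases jp_adj_lr.mp (hD ha hL (by simp)) with h | h
        · exfalso; have := h.1; simp [hiLdef] at this; omega
        · exact h.2
      by_cases h1 : Sum.inr (⟨l - 2, by omega⟩ : Fin l) ∈ D
      · have hl3 : 3 ≤ l := by
          by_contra hc
          apply h0
          have : i0 = ⟨l - 2, by omega⟩ := Fin.ext (by simp [hi0def]; omega)
          rwa [this]
        have hDvE : ∀ a : V, Sum.inl a ∉ D := by
          intro a ha
          rcases jp_adj_lr.mp (hD ha h1 (by simp)) with h | h <;>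
            · have := h.1; simp at this; omega
        have hDP : ∀ j : Fin l, Sum.inr j ∈ D → l - 2 ≤ j.val := by
          intro j hj
          by_cases hji : j = iL
          · simp [hji, hiLdef]; omega
          rcases jp_adj_rr.mp (hD hj hL (fun h => hji (Sum.inr.inj h))) with h | h <;>
            simp [hiLdef] at h <;> omega
        obtain ⟨a0, ha0⟩ := hAne
        refine concl ⟨Sum.inl a0, hDvE a0⟩ ?_
        rintro ⟨(v | i), hx⟩
        · exact gReach v a0 hx (hDvE a0)
        · have hi2 : i.val ≤ l - 3 := by
            by_contra hc
            apply hx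
            rcases (by omega : i.val = l - 2 ∨ i.val = l - 1) with h | h
            · have : i = ⟨l - 2, by omega⟩ := Fin.ext (by simp [h])
              rwa [this]
            · have : i = iL := Fin.ext (by simp [hiLdef, h])
              rwa [this]
          have hall : ∀ k : Fin l, i0.val ≤ k.val → k.val ≤ i.val → Sum.inr k ∈ S := by
            intro k _ hk hkD
            have := hDP k hkD
            omega
          exact ((pReach' i0 i (by simp [hi0def]) hall).symm).trans
            (Adj.reachable (adjL a0 ha0 (hDvE a0) (hall i0 le_rfl (by simp [hi0def]))))
      · have hDP : ∀ j : Fin l, Sum.inr j ∈ D → j = iL := by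
          intro j hj
          by_contra hji
          rcases jp_adj_rr.mp (hD hj hL (fun h => hji (Sum.inr.inj h))) with h | h
          · apply absurd h1
            simp only [not_not]
            have he : j = ⟨l - 2, by omega⟩ := Fin.ext (by simp [hiLdef] at h ⊢; omega)
            rwa [← he]
          · exfalso; simp [hiLdef] at h; omega
        obtain ⟨a0, ha0⟩ := hAne
        have ha0S : Sum.inl a0 ∈ S := fun hc => Set.disjoint_left.mp hdisj ha0 (hDvB a0 hc)
        refine concl ⟨Sum.inl a0, ha0S⟩ ?_
        rintro ⟨(v | i), hx⟩
        · exact gReach v a0 hx ha0S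
        · have hi1 : i.val ≤ l - 2 := by
            by_contra hc
            apply hx
            have : i = iL := Fin.ext (by simp [hiLdef]; omega)
            rwa [this]
          have hall : ∀ k : Fin l, i0.val ≤ k.val → k.val ≤ i.val → Sum.inr k ∈ S := by
            intro k _ hk hkD
            have := congrArg Fin.val (hDP k hkD)
            simp [hiLdef] at this
            omega
          exact ((pReach' i0 i (by simp [hi0def]) hall).symm).trans
            (Adj.reachable (adjL a0 ha0 ha0S (hall i0 le_rfl (by simp [hi0def]))))
    · -- no endpoint removed
      by_cases hP : ∃ i : Fin l, Sum.inr i ∈ D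
      · obtain ⟨i, hi⟩ := hP
        have hi1 : 1 ≤ i.val := by
          by_contra hc
          apply h0
          have : i = i0 := Fin.ext (by simp [hi0def]; omega)
          rwa [← this]
        have hi2 : i.val ≤ l - 2 := by
          by_contra hc
          apply hL
          have : i = iL := Fin.ext (by simp [hiLdef]; omega)
          rwa [← this]
        have hDvE : ∀ a : V, Sum.inl a ∉ D := by
          intro a ha
          rcases jp_adj_lr.mp (hD ha hi (by simp)) with h | h <;>
            · have := h.1; omega
        obtain ⟨m, hm⟩ : ∃ m : ℕ, ∀ j : Fin l, Sum.inr j ∈ D → j.val = m ∨ j.val = m + 1 := by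
          by_cases hprev : Sum.inr (⟨i.val - 1, by omega⟩ : Fin l) ∈ D
          · refine ⟨i.val - 1, fun j hj => ?_⟩
            by_cases hji : j = i
            · right; simp [hji]; omega
            rcases jp_adj_rr.mp (hD hj hi (fun h => hji (Sum.inr.inj h))) with h | h
            · left; omega
            · exfalso
              have hjne : (Sum.inr j : V ⊕ Fin l) ≠ Sum.inr ⟨i.val - 1, by omega⟩ := by
                intro hh
                have := congrArg Fin.val (Sum.inr.inj hh)
                simp at this
                omega
              rcases jp_adj_rr.mp (hD hj hprev hjne) with h2 | h2 <;> simp at h2 <;> omega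
          · refine ⟨i.val, fun j hj => ?_⟩
            by_cases hji : j = i
            · left; simp [hji]
            rcases jp_adj_rr.mp (hD hj hi (fun h => hji (Sum.inr.inj h))) with h | h
            · exfalso
              apply hprev
              have he : j = ⟨i.val - 1, by omega⟩ := Fin.ext (by simp; omega)
              rwa [← he]
            · right; omega
        obtain ⟨a0, ha0⟩ := hAne
        obtain ⟨b0, hb0⟩ := hBne
        refine concl ⟨Sum.inl a0, hDvE a0⟩ ?_
        rintro ⟨(v | i'), hx⟩
        · exact gReach v a0 hx (hDvE a0)
        · by_cases hcase : i'.val ≤ m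
          · have hall : ∀ k : Fin l, i0.val ≤ k.val → k.val ≤ i'.val → Sum.inr k ∈ S := by
              intro k _ hk hkD
              have hk2 := hm k hkD
              have : k = i' := Fin.ext (by omega)
              exact hx (this ▸ hkD)
            exact ((pReach' i0 i' (by simp [hi0def]) hall).symm).trans
              (Adj.reachable (adjL a0 ha0 (hDvE a0) (hall i0 le_rfl (by simp [hi0def]))))
          · have hall : ∀ k : Fin l, i'.val ≤ k.val → k.val ≤ iL.val → Sum.inr k ∈ S := by
              intro k hk _ hkD
              have hk2 := hm k hkD
              have : k = i' := Fin.ext (by omega)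
              exact hx (this ▸ hkD)
            exact (pReach' i' iL (by simp [hiLdef]; omega) hall).trans
              ((Adj.reachable (adjR b0 hb0 (hDvE b0)
                (hall iL (by simp [hiLdef]; omega) le_rfl))).trans
                (gReach b0 a0 (hDvE b0) (hDvE a0)))
      · push_neg at hP
        by_cases hAD : ∀ a ∈ A, Sum.inl a ∈ D
        · have hAeq : A = Dv := hA.2 Dv hDvClique (fun a ha => hAD a ha)
          obtain ⟨b0, hb0⟩ := hBne
          have hb0S : Sum.inl b0 ∈ S := fun hc =>
            Set.disjoint_left.mp hdisj (by rw [hAeq]; exact hc) hb0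
          refine concl ⟨Sum.inl b0, hb0S⟩ ?_
          rintro ⟨(v | i), hx⟩
          · exact gReach v b0 hx hb0S
          · have hall : ∀ k : Fin l, i.val ≤ k.val → k.val ≤ iL.val → Sum.inr k ∈ S :=
              fun k _ _ => hP k
            exact (pReach' i iL (by simp [hiLdef]; omega) hall).trans
              (Adj.reachable (adjR b0 hb0 hb0S (hP iL)))
        · push_neg at hAD
          obtain ⟨a0, ha0A, ha0S⟩ := hAD
          refine concl ⟨Sum.inl a0, ha0S⟩ ?_
          rintro ⟨(v | i), hx⟩
          · exact gReach v a0 hx ha0S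
          · have hall : ∀ k : Fin l, i0.val ≤ k.val → k.val ≤ i.val → Sum.inr k ∈ S :=
              fun k _ _ => hP k
            exact ((pReach' i0 i (by simp [hi0def]) hall).symm).trans
              (Adj.reachable (adjL a0 ha0A ha0S (hP i0)))

end Extend


theorem gate_aux : ∀ {V : Type} (G : SimpleGraph V), IsGate G → ∀ C : Set V,
    G.IsClique C → (G.induce Cᶜ).Connected := by
  intro V G hG
  induction hG with
  | cycle n hn =>
    intro C hC
    haveI : NeZero n := ⟨by omega⟩
    obtain ⟨a, ha⟩ := cyc_clique_sub hn C hC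
    exact cyc_conn hn a C ha
  | extend G A B l hG hAm hBm hdisj hl ih =>
    intro D hD
    exact extend_conn hAm hBm hdisj hl ih D hD
  | iso G H hG e ih =>
    intro C hC
    have hE : G.IsClique ((⇑e) ⁻¹' C) := by
      intro x hx y hy hxy
      have := hC hx hy (fun h => hxy (e.toEquiv.injective h))
      exact e.map_adj_iff.mp this
    have hconn := ih _ hE
    have iso2 : G.induce ((⇑e) ⁻¹' C)ᶜ ≃g H.induce Cᶜ := by
      refine ⟨e.toEquiv.subtypeEquiv fun v => ?_, ?_⟩
      · simp [Set.mem_compl_iff]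
      · intro a b
        simp only [Equiv.subtypeEquiv_apply, SimpleGraph.comap_adj, Function.Embedding.coe_subtype]
        exact e.map_adj_iff
    exact iso2.connected_iff.mp hconn

theorem stmt6 {V : Type} (G : SimpleGraph V) (hG : IsGate G)
    (C : Set V) (hC : G.IsClique C) : (G.induce Cᶜ).Connected :=
  gate_aux G hG C hC
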